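/- In the partial linear regression model, for any θ, h ∈ ℝ, n ≥ 1 and η, the squared Hellinger distance satisfies H²(P_{θ₀+h/√n, η}, P_{θ₀, η}) ≤ (h²/(2n)) E U² + (|h|³/(6n²)) E U⁴; in particular, if E U² < ∞, E U⁴ < ∞ and |h| ≤ M, then H²(P_{θ₀+h/√n, η}, P_{θ₀, η}) = O(1/n) uniformly in η. -/

import Mathlib

open MeasureTheory ProbabilityTheory Real

lemma gaussianReal_one_withDensity :
    gaussianReal 0 1 = (volume : Measure ℝ).withDensity
      (fun x => ((gaussianPDFReal 0 1 x).toNNReal : ENNReal)) := by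
  rw [gaussianReal_of_var_ne_zero _ one_ne_zero]
  rfl

lemma integrable_gaussianReal_iff' (g : ℝ → ℝ) :
    Integrable g (gaussianReal 0 1) ↔
      Integrable (fun x => g x * gaussianPDFReal 0 1 x) volume := by
  rw [gaussianReal_one_withDensity,
    integrable_withDensity_iff ((measurable_gaussianPDFReal 0 1).real_toNNReal.coe_nnreal_ennreal)
      (Filter.Eventually.of_forall fun x => ENNReal.coe_lt_top)]
  refine integrable_congr (Filter.Eventually.of_forall fun x => ?_)
  simp [Real.coe_toNNReal _ (gaussianPDFReal_nonneg 0 1 x)]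

lemma integral_gaussianReal_eq (g : ℝ → ℝ) :
    ∫ x, g x ∂(gaussianReal 0 1) = ∫ x, gaussianPDFReal 0 1 x * g x := by
  rw [gaussianReal_one_withDensity,
    integral_withDensity_eq_integral_smul (measurable_gaussianPDFReal 0 1).real_toNNReal g]
  refine integral_congr_ae (Filter.Eventually.of_forall fun x => ?_)
  simp [NNReal.smul_def, Real.coe_toNNReal _ (gaussianPDFReal_nonneg 0 1 x)]

lemma gauss_exp_integrable : Integrable (fun x : ℝ => rexp (x ^ 2 / 4)) (gaussianReal 0 1) := by
  rw [integrable_gaussianReal_iff']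
  have hfun : (fun x : ℝ => rexp (x ^ 2 / 4) * gaussianPDFReal 0 1 x)
      = fun x : ℝ => (Real.sqrt (2 * π))⁻¹ * rexp (-(1/4 : ℝ) * x ^ 2) := by
    funext x
    simp only [gaussianPDFReal, NNReal.coe_one, mul_one, sub_zero]
    rw [mul_comm, mul_assoc, ← Real.exp_add]
    congr 1
    ring
  rw [hfun]
  exact (integrable_exp_neg_mul_sq (by norm_num : (0:ℝ) < 1/4)).const_mul _

lemma gauss_integral_id : ∫ x, x ∂(gaussianReal 0 1) = 0 := by
  rw [integral_gaussianReal_eq (fun x => x)]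
  have hodd : ∀ x : ℝ, gaussianPDFReal 0 1 (-x) * (-x) = -(gaussianPDFReal 0 1 x * x) := by
    intro x
    rw [gaussianPDFReal, gaussianPDFReal]
    ring_nf
  have := MeasureTheory.integral_neg_eq_self (fun x => gaussianPDFReal 0 1 x * x)
    (volume : Measure ℝ)
  simp only [hodd, integral_neg] at this
  linarith

/-- Hellinger bound in partial linear regression (Bickel–Kleijn, Thm 7.1): since
`(p_{θ₀+h/√n,η}/p_{θ₀,η})^{1/2}(X) = exp((h/2√n) e U - (h²/4n) U²)` with `e ~ N(0,1)`
independent of `U`, the squared Hellinger distance `H² = 2(1 - affinity)` satisfies the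
η-independent bound `H² ≤ (h²/2n) EU² + (|h|³/6n²) EU⁴`, hence is `O(1/n)` for `|h| ≤ M`. -/
theorem plr_hellinger_bound {Ω : Type*} [MeasurableSpace Ω]
    (P : Measure Ω) [IsProbabilityMeasure P]
    (U e : Ω → ℝ) (hU : Measurable U) (he : Measurable e)
    (hlaw : Measure.map e P = gaussianReal 0 1) (hindep : IndepFun e U P)
    (hU2 : Integrable (fun ω => U ω ^ 2) P) (hU4 : Integrable (fun ω => U ω ^ 4) P) :
    (∀ (n : ℕ), 1 ≤ n → ∀ h : ℝ,
      2 * (1 - ∫ ω, exp ((h / (2 * Real.sqrt n)) * (e ω * U ω)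
            - (h ^ 2 / (4 * n)) * U ω ^ 2) ∂P)
        ≤ (h ^ 2 / (2 * n)) * ∫ ω, U ω ^ 2 ∂P
          + (|h| ^ 3 / (6 * (n : ℝ) ^ 2)) * ∫ ω, U ω ^ 4 ∂P) ∧
    (∀ M : ℝ, 0 < M → ∃ C : ℝ, ∀ (n : ℕ), 1 ≤ n → ∀ h : ℝ, |h| ≤ M →
      2 * (1 - ∫ ω, exp ((h / (2 * Real.sqrt n)) * (e ω * U ω)
            - (h ^ 2 / (4 * n)) * U ω ^ 2) ∂P) ≤ C / n) := by
  -- preliminary integrability facts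
  have intExpE : Integrable (fun ω => rexp (e ω ^ 2 / 4)) P := by
    have h0 := gauss_exp_integrable
    rw [← hlaw] at h0
    have := (integrable_map_measure
      (g := fun x : ℝ => rexp (x ^ 2 / 4)) ?_ he.aemeasurable).mp h0
    · exact this
    · exact (Real.continuous_exp.comp ((continuous_pow 2).div_const 4)).aestronglyMeasurable
  have intE : Integrable e P := by
    refine (intExpE.const_mul 2).mono' he.aestronglyMeasurable ?_
    filter_upwards with ω
    rw [Real.norm_eq_abs]
    nlinarith [Real.add_one_le_exp (e ω ^ 2 / 4), sq_abs (e ω), abs_nonneg (e ω),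
      sq_nonneg (|e ω| - 2)]
  have intU : Integrable U P := by
    refine ((integrable_const (1:ℝ)).add hU2).mono' hU.aestronglyMeasurable ?_
    filter_upwards with ω
    simp only [Pi.add_apply]
    rw [Real.norm_eq_abs]
    nlinarith [sq_abs (U ω), abs_nonneg (U ω), sq_nonneg (|U ω| - 1)]
  have intEU : Integrable (fun ω => e ω * U ω) P := hindep.integrable_mul intE intU
  have hEe : ∫ ω, e ω ∂P = 0 := by
    have h1 : ∫ ω, e ω ∂P = ∫ x, x ∂(Measure.map e P) :=
      (integral_map he.aemeasurable aestronglyMeasurable_id).symm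
    rw [h1, hlaw, gauss_integral_id]
  have hEeU : ∫ ω, e ω * U ω ∂P = 0 := by
    have h1 := hindep.integral_fun_mul_eq_mul_integral intE.1 intU.1
    simpa [hEe] using h1
  have hU2nn : 0 ≤ ∫ ω, U ω ^ 2 ∂P := integral_nonneg fun ω => sq_nonneg _
  have hU4nn : 0 ≤ ∫ ω, U ω ^ 4 ∂P := integral_nonneg fun ω => by positivity
  have key : ∀ (n : ℕ), 1 ≤ n → ∀ h : ℝ,
      2 * (1 - ∫ ω, exp ((h / (2 * Real.sqrt n)) * (e ω * U ω)
            - (h ^ 2 / (4 * n)) * U ω ^ 2) ∂P)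
        ≤ (h ^ 2 / (2 * n)) * ∫ ω, U ω ^ 2 ∂P := by
    intro n hn h
    have hn0 : (0:ℝ) < n := by exact_mod_cast Nat.lt_of_lt_of_le Nat.zero_lt_one hn
    set a : ℝ := h / (2 * Real.sqrt n) with ha
    have ha2 : a ^ 2 = h ^ 2 / (4 * n) := by
      rw [ha, div_pow, mul_pow, Real.sq_sqrt hn0.le]
      norm_num
    have intZ : Integrable (fun ω => a * (e ω * U ω) - h ^ 2 / (4 * n) * U ω ^ 2) P := by
      exact (intEU.const_mul a).sub (hU2.const_mul _)
    have measZ : Measurable (fun ω => a * (e ω * U ω) - h ^ 2 / (4 * n) * U ω ^ 2) := by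
      exact (measurable_const.mul (he.mul hU)).sub (measurable_const.mul (hU.pow_const 2))
    have hZle : ∀ ω, a * (e ω * U ω) - h ^ 2 / (4 * n) * U ω ^ 2 ≤ e ω ^ 2 / 4 := by
      intro ω
      rw [← ha2]
      nlinarith [sq_nonneg (e ω / 2 - a * U ω)]
    have intExpZ : Integrable
        (fun ω => rexp (a * (e ω * U ω) - h ^ 2 / (4 * n) * U ω ^ 2)) P := by
      refine intExpE.mono' measZ.exp.aestronglyMeasurable ?_
      filter_upwards with ω
      rw [Real.norm_eq_abs, abs_of_pos (Real.exp_pos _)]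
      exact Real.exp_le_exp.mpr (hZle ω)
    have hEZ : ∫ ω, (a * (e ω * U ω) - h ^ 2 / (4 * n) * U ω ^ 2) ∂P
        = -(h ^ 2 / (4 * n)) * ∫ ω, U ω ^ 2 ∂P := by
      rw [integral_sub (intEU.const_mul a) (hU2.const_mul _),
        integral_const_mul, integral_const_mul, hEeU]
      ring
    have lower : 1 - h ^ 2 / (4 * n) * ∫ ω, U ω ^ 2 ∂P
        ≤ ∫ ω, rexp (a * (e ω * U ω) - h ^ 2 / (4 * n) * U ω ^ 2) ∂P := by
      have int1Z : Integrable
          (fun ω => 1 + (a * (e ω * U ω) - h ^ 2 / (4 * n) * U ω ^ 2)) P :=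
        (integrable_const 1).add intZ
      have hmono : (∫ ω, (1 + (a * (e ω * U ω) - h ^ 2 / (4 * n) * U ω ^ 2)) ∂P)
          ≤ ∫ ω, rexp (a * (e ω * U ω) - h ^ 2 / (4 * n) * U ω ^ 2) ∂P :=
        integral_mono int1Z intExpZ (fun ω => by
          have := Real.add_one_le_exp (a * (e ω * U ω) - h ^ 2 / (4 * n) * U ω ^ 2)
          linarith)
      rw [integral_add (integrable_const 1) intZ, integral_const, hEZ] at hmono
      simp only [probReal_univ, measure_univ, ENNReal.toReal_one, smul_eq_mul, one_mul, mul_one] at hmono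
      linarith
    have heq : (∫ ω, exp ((h / (2 * Real.sqrt n)) * (e ω * U ω)
          - (h ^ 2 / (4 * n)) * U ω ^ 2) ∂P)
        = ∫ ω, rexp (a * (e ω * U ω) - h ^ 2 / (4 * n) * U ω ^ 2) ∂P := rfl
    rw [heq]
    have : 2 * (h ^ 2 / (4 * n) * ∫ ω, U ω ^ 2 ∂P)
        = h ^ 2 / (2 * n) * ∫ ω, U ω ^ 2 ∂P := by ring
    linarith
  constructor
  · intro n hn h
    have h1 := key n hn h
    have h2 : 0 ≤ |h| ^ 3 / (6 * (n : ℝ) ^ 2) * ∫ ω, U ω ^ 4 ∂P := by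
      have hn0 : (0:ℝ) < n := by exact_mod_cast Nat.lt_of_lt_of_le Nat.zero_lt_one hn
      have : (0:ℝ) ≤ |h| ^ 3 / (6 * (n : ℝ) ^ 2) := by positivity
      exact mul_nonneg this hU4nn
    linarith
  · intro M hM
    refine ⟨M ^ 2 / 2 * ∫ ω, U ω ^ 2 ∂P + M ^ 3 / 6 * ∫ ω, U ω ^ 4 ∂P, ?_⟩
    intro n hn h hhM
    have hn1 : (1:ℝ) ≤ n := by exact_mod_cast hn
    have hn0 : (0:ℝ) < n := lt_of_lt_of_le one_pos hn1
    have h1 := key n hn h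
    have hh2 : h ^ 2 ≤ M ^ 2 := by nlinarith [abs_nonneg h, sq_abs h]
    have e1 : h ^ 2 / (2 * n) * ∫ ω, U ω ^ 2 ∂P ≤ (M ^ 2 / 2 * ∫ ω, U ω ^ 2 ∂P) / n := by
      have hrw : h ^ 2 / (2 * (n:ℝ)) * ∫ ω, U ω ^ 2 ∂P
          = (h ^ 2 / 2 * ∫ ω, U ω ^ 2 ∂P) / n := by ring
      rw [hrw]
      gcongr
    calc 2 * (1 - ∫ ω, exp ((h / (2 * Real.sqrt n)) * (e ω * U ω)
            - (h ^ 2 / (4 * n)) * U ω ^ 2) ∂P)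
        ≤ h ^ 2 / (2 * n) * ∫ ω, U ω ^ 2 ∂P := h1
      _ ≤ (M ^ 2 / 2 * ∫ ω, U ω ^ 2 ∂P) / n := e1
      _ ≤ (M ^ 2 / 2 * ∫ ω, U ω ^ 2 ∂P + M ^ 3 / 6 * ∫ ω, U ω ^ 4 ∂P) / n := by
          have hy : (0:ℝ) ≤ M ^ 3 / 6 * ∫ ω, U ω ^ 4 ∂P := by positivity
          gcongr
          exact le_add_of_nonneg_right hy
      _ = _ := rfl
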